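/- Let k be a positive integer. For every ε > 0 there exists a constant C > 0 such that for all positive integers Q, N with Q^k ≤ N ≤ Q^{2k}, every integer M, and every sequence of complex numbers (z_n), one has ∑_{q=1}^{Q} ∑_{1 ≤ a ≤ q^k, gcd(a,q)=1} |∑_{n=M+1}^{M+N} z_n e(n a / q^k)|^2 ≤ C · Q^ε · N · S · ∑_{n=M+1}^{M+N} |z_n|^2, where, with δ = 1/(2N), S = sup over real x with 1 ≤ x ≤ Q and over α₀ ∈ 𝒜_k(x) of the cardinality |{α ∈ 𝒜_k(x) : ‖α − α₀‖ < δ}|, and 𝒜_k(x) = {a/q^k : q, a positive integers with x/2 < q ≤ x, a ≤ q^k, gcd(a,q) = 1}. -/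

import Mathlib

open Finset

/-- `e(α) = exp(2πiα)`. -/
noncomputable def eC (α : ℝ) : ℂ := Complex.exp (2 * Real.pi * Complex.I * α)

/-- The large sieve sum with k-th power moduli:
`∑_{q=1}^{Q} ∑_{1 ≤ a ≤ q^k, gcd(a,q)=1} |∑_{n=M+1}^{M+N} z_n e(n a / q^k)|²`. -/
noncomputable def lsSum (k Q N : ℕ) (M : ℤ) (z : ℤ → ℂ) : ℝ :=
  ∑ q ∈ Finset.Icc 1 Q,
    ∑ a ∈ (Finset.Icc 1 (q ^ k)).filter (fun a => Nat.gcd a q = 1),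
      ‖∑ n ∈ Finset.Icc (M + 1) (M + (N : ℤ)),
        z n * eC ((n : ℝ) * (a : ℝ) / (q : ℝ) ^ k)‖ ^ 2

/-- `∑_{n=M+1}^{M+N} |z_n|²`. -/
noncomputable def zSum (N : ℕ) (M : ℤ) (z : ℤ → ℂ) : ℝ :=
  ∑ n ∈ Finset.Icc (M + 1) (M + (N : ℤ)), ‖z n‖ ^ 2

/-- `𝒜_k(x) = {a/q^k : x/2 < q ≤ x, 1 ≤ a ≤ q^k, gcd(a,q)=1}` as a set of reals. -/
def Aset (k : ℕ) (x : ℝ) : Set ℝ :=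
  {α | ∃ q a : ℕ, 0 < q ∧ x / 2 < (q : ℝ) ∧ (q : ℝ) ≤ x ∧ 0 < a ∧ a ≤ q ^ k ∧
    Nat.Coprime a q ∧ α = (a : ℝ) / (q : ℝ) ^ k}

/-- `‖α‖`: the distance from `α` to the nearest integer. -/
noncomputable def ndist (α : ℝ) : ℝ := |α - round α|



section AuxLS

open MeasureTheory Complex


lemma ndist_le_abs (x : ℝ) : ndist x ≤ |x| := by
  simpa [ndist] using round_le x 0

/-- trig polynomial with coefficients `d` over frequency set `F`. -/
noncomputable def tp (d : ℕ → ℂ) (F : Finset ℕ) (t : ℝ) : ℂ :=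
  ∑ m ∈ F, d m * Complex.exp (2 * Real.pi * Complex.I * m * t)

lemma cont_cexp (a : ℂ) : Continuous fun t : ℝ => Complex.exp (a * t) :=
  Complex.continuous_exp.comp (continuous_const.mul Complex.continuous_ofReal)

lemma tp_continuous (d : ℕ → ℂ) (F : Finset ℕ) : Continuous (tp d F) := by
  apply continuous_finset_sum
  intro m _
  exact continuous_const.mul (cont_cexp _)

lemma hasDerivAt_cexp_mul (a : ℂ) (t : ℝ) :
    HasDerivAt (fun s : ℝ => Complex.exp (a * s)) (a * Complex.exp (a * t)) t := by
  have h1 : HasDerivAt (fun s : ℝ => (s : ℂ)) 1 t := Complex.ofRealCLM.hasDerivAt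
  have h2 : HasDerivAt (fun s : ℝ => a * (s : ℂ)) a t := by simpa using h1.const_mul a
  simpa [mul_comm] using h2.cexp

lemma tp_hasDerivAt (d : ℕ → ℂ) (F : Finset ℕ) (t : ℝ) :
    HasDerivAt (tp d F) (tp (fun m => 2 * Real.pi * Complex.I * m * d m) F t) t := by
  have : HasDerivAt (tp d F)
      (∑ m ∈ F, d m * (2 * Real.pi * Complex.I * m * Complex.exp (2 * Real.pi * Complex.I * m * t))) t := by
    unfold tp
    apply HasDerivAt.fun_sum
    intro m _
    exact (hasDerivAt_cexp_mul _ t).const_mul (d m)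
  convert this using 1
  unfold tp
  apply Finset.sum_congr rfl
  intro m _
  ring

lemma tp_periodic (d : ℕ → ℂ) (F : Finset ℕ) : Function.Periodic (tp d F) 1 := by
  intro t
  unfold tp
  apply Finset.sum_congr rfl
  intro m _
  congr 1
  push_cast
  rw [mul_add, Complex.exp_add, mul_one]
  have : Complex.exp (2 * Real.pi * Complex.I * m) = 1 := by
    simpa [mul_comm, mul_assoc, mul_left_comm] using Complex.exp_int_mul_two_pi_mul_I m
  rw [this, mul_one]

/-- `∫₀¹ e(jt) dt = [j = 0]`. -/
lemma integral_exp_int (j : ℤ) :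
    ∫ t in (0:ℝ)..1, Complex.exp (2 * Real.pi * Complex.I * j * t) =
      if j = 0 then 1 else 0 := by
  rcases eq_or_ne j 0 with h | h
  · simp [h]
  · rw [if_neg h]
    have hc : (2 * Real.pi * Complex.I * j : ℂ) ≠ 0 := by
      simp [Real.pi_ne_zero, Complex.I_ne_zero, h, Complex.ext_iff]
    rw [integral_exp_mul_complex hc]
    have h1 : Complex.exp (2 * Real.pi * Complex.I * (j:ℂ)) = 1 := by
      simpa [mul_comm, mul_assoc, mul_left_comm] using Complex.exp_int_mul_two_pi_mul_I j
    rw [Complex.ofReal_one, Complex.ofReal_zero, mul_one, mul_zero, h1, Complex.exp_zero]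
    simp


lemma intervalIntegral_re {f : ℝ → ℂ} {a b : ℝ} (hf : IntervalIntegrable f volume a b) :
    ∫ t in a..b, (f t).re = (∫ t in a..b, f t).re := by
  have := Complex.reCLM.intervalIntegral_comp_comm hf
  simpa using this

/-- expansion of `conj (tp d F t) * tp d F t`. -/
lemma conj_tp_mul (d : ℕ → ℂ) (F : Finset ℕ) (t : ℝ) :
    (starRingEnd ℂ) (tp d F t) * tp d F t =
      ∑ m ∈ F, ∑ n ∈ F, ((starRingEnd ℂ) (d m) * d n) *
        Complex.exp (2 * Real.pi * Complex.I * (((n:ℤ) - (m:ℤ) : ℤ) : ℂ) * t) := by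
  unfold tp
  rw [map_sum, Finset.sum_mul_sum]
  apply Finset.sum_congr rfl
  intro m _
  apply Finset.sum_congr rfl
  intro n _
  rw [map_mul]
  have hconj : (starRingEnd ℂ) (Complex.exp (2 * Real.pi * Complex.I * m * t)) =
      Complex.exp (-(2 * Real.pi * Complex.I * m * t)) := by
    rw [← Complex.exp_conj]
    congr 1
    simp only [map_mul, Complex.conj_I, Complex.conj_ofReal, map_ofNat, map_natCast]
    ring
  rw [hconj]
  rw [mul_mul_mul_comm, ← Complex.exp_add]
  congr 2
  push_cast
  ring

lemma tp_parseval (d : ℕ → ℂ) (F : Finset ℕ) :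
    ∫ t in (0:ℝ)..1, Complex.normSq (tp d F t) = ∑ m ∈ F, Complex.normSq (d m) := by
  have hint : ∫ t in (0:ℝ)..1, (starRingEnd ℂ) (tp d F t) * tp d F t =
      ∑ m ∈ F, (Complex.normSq (d m) : ℂ) := by
    have : ∀ t : ℝ, (starRingEnd ℂ) (tp d F t) * tp d F t =
        ∑ m ∈ F, ∑ n ∈ F, ((starRingEnd ℂ) (d m) * d n) *
          Complex.exp (2 * Real.pi * Complex.I * (((n:ℤ) - (m:ℤ) : ℤ) : ℂ) * t) :=
      conj_tp_mul d F
    rw [intervalIntegral.integral_congr (fun t _ => this t)]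
    rw [intervalIntegral.integral_finset_sum]
    · have : ∀ m ∈ F, (∫ t in (0:ℝ)..1, ∑ n ∈ F, ((starRingEnd ℂ) (d m) * d n) *
          Complex.exp (2 * Real.pi * Complex.I * (((n:ℤ) - (m:ℤ) : ℤ) : ℂ) * t)) =
          (Complex.normSq (d m) : ℂ) := by
        intro m hm
        rw [intervalIntegral.integral_finset_sum]
        · have : ∀ n ∈ F, (∫ t in (0:ℝ)..1, ((starRingEnd ℂ) (d m) * d n) *
              Complex.exp (2 * Real.pi * Complex.I * (((n:ℤ) - (m:ℤ) : ℤ) : ℂ) * t)) =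
              if n = m then (Complex.normSq (d m) : ℂ) else 0 := by
            intro n _
            rw [intervalIntegral.integral_const_mul, integral_exp_int ((n:ℤ) - (m:ℤ))]
            rcases eq_or_ne n m with h | h
            · rw [if_pos h, h]
              simp only [sub_self, ite_true, eq_self_iff_true, if_true, one_mul, mul_one]
              rw [mul_comm, Complex.mul_conj]
            · have : ((n:ℤ) - (m:ℤ)) ≠ 0 := by
                omega
              simp [this, h]
          rw [Finset.sum_congr rfl this, Finset.sum_ite_eq' F m (fun _ => (Complex.normSq (d m) : ℂ)),
            if_pos hm]
        · intro n _
          exact (Continuous.intervalIntegrable (by exact continuous_const.mul (by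
              exact Complex.continuous_exp.comp (continuous_const.mul Complex.continuous_ofReal))) _ _)
      rw [Finset.sum_congr rfl this]
    · intro m _
      apply Continuous.intervalIntegrable
      apply continuous_finset_sum
      intro n _
      exact continuous_const.mul (Complex.continuous_exp.comp (continuous_const.mul Complex.continuous_ofReal))
  have hre : ∀ t : ℝ, Complex.normSq (tp d F t) = ((starRingEnd ℂ) (tp d F t) * tp d F t).re := by
    intro t
    rw [mul_comm, Complex.mul_conj, Complex.ofReal_re]
  rw [intervalIntegral.integral_congr (fun t _ => hre t)]
  rw [intervalIntegral_re, hint]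
  · simp
  · apply Continuous.intervalIntegrable
    exact (Complex.continuous_conj.comp (tp_continuous d F)).mul (tp_continuous d F)


lemma sobolev {φ φd : ℝ → ℝ} (hd : ∀ t, HasDerivAt φ (φd t) t) (hc : Continuous φ)
    (hcd : Continuous φd) {η : ℝ} (hη : 0 < η) (α : ℝ) :
    φ α ≤ η⁻¹ * (∫ t in α..(α+η), φ t) + ∫ t in α..(α+η), |φd t| := by
  have key : ∀ t ∈ Set.Icc α (α+η), φ α ≤ φ t + ∫ s in α..(α+η), |φd s| := by
    intro t ht
    have hft : ∫ s in α..t, φd s = φ t - φ α :=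
      intervalIntegral.integral_eq_sub_of_hasDerivAt (fun x _ => hd x)
        (hcd.intervalIntegrable _ _)
    have h2 : |∫ s in α..t, φd s| ≤ ∫ s in α..t, |φd s| :=
      intervalIntegral.abs_integral_le_integral_abs ht.1
    have h3 : ∫ s in α..t, |φd s| ≤ ∫ s in α..(α+η), |φd s| := by
      apply intervalIntegral.integral_mono_interval le_rfl ht.1 ht.2
        (Filter.Eventually.of_forall fun s => abs_nonneg _) (hcd.abs.intervalIntegrable _ _)
    have h4 := neg_abs_le (∫ s in α..t, φd s)
    linarith [hft ▸ le_refl (φ t - φ α)]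
  have hαη : α ≤ α + η := by linarith
  have h5 : ∫ t in α..(α+η), φ α ≤
      ∫ t in α..(α+η), (φ t + ∫ s in α..(α+η), |φd s|) := by
    apply intervalIntegral.integral_mono_on hαη intervalIntegrable_const
      ((hc.add continuous_const).intervalIntegrable _ _) key
  rw [intervalIntegral.integral_const,
    intervalIntegral.integral_add (hc.intervalIntegrable _ _) intervalIntegrable_const,
    intervalIntegral.integral_const] at h5
  have h6 : (α + η - α) = η := by ring
  rw [h6] at h5
  simp only [smul_eq_mul] at h5
  have h7 : η * φ α ≤ (∫ t in α..(α+η), φ t) + η * ∫ s in α..(α+η), |φd s| := by linarith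
  have h8 : φ α = η⁻¹ * (η * φ α) := by field_simp
  rw [h8]
  calc η⁻¹ * (η * φ α) ≤ η⁻¹ * ((∫ t in α..(α+η), φ t) + η * ∫ s in α..(α+η), |φd s|) := by
        apply mul_le_mul_of_nonneg_left h7 (by positivity)
    _ = η⁻¹ * (∫ t in α..(α+η), φ t) + ∫ t in α..(α+η), |φd t| := by
        field_simp

lemma covering (T : Finset ℝ) (hT : ∀ α ∈ T, 0 < α ∧ α ≤ 1) {η : ℝ} (hη : 0 < η)
    (hη8 : η ≤ 1/8) (S : ℝ) (hS0 : 0 ≤ S)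
    (hcard : ∀ t : ℝ, ((T.filter fun α => t ∈ Set.Ioc α (α + η)).card : ℝ) ≤ S)
    (h : ℝ → ℝ) (hc : Continuous h) (h0 : ∀ t, 0 ≤ h t) (hp : Function.Periodic h 1) :
    ∑ α ∈ T, ∫ t in α..(α + η), h t ≤ 2 * S * ∫ t in (0:ℝ)..1, h t := by
  have hind : ∀ α : ℝ, ∫ t in α..(α + η), h t =
      ∫ t, (Set.Ioc α (α+η)).indicator h t := by
    intro α
    rw [intervalIntegral.integral_of_le (by linarith), ← integral_indicator measurableSet_Ioc]
  have hinteg : ∀ α : ℝ, Integrable ((Set.Ioc α (α+η)).indicator h) volume :=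
    fun α => (hc.integrableOn_Ioc).integrable_indicator measurableSet_Ioc
  have hsum : ∑ α ∈ T, ∫ t in α..(α + η), h t =
      ∫ t, ∑ α ∈ T, (Set.Ioc α (α+η)).indicator h t := by
    rw [integral_finset_sum T (fun α _ => hinteg α)]
    exact Finset.sum_congr rfl fun α _ => hind α
  have hpt : ∀ t : ℝ, ∑ α ∈ T, (Set.Ioc α (α+η)).indicator h t ≤
      S * (Set.Ioc (0:ℝ) 2).indicator h t := by
    intro t
    have hL : ∑ α ∈ T, (Set.Ioc α (α+η)).indicator h t =
        ((T.filter fun α => t ∈ Set.Ioc α (α + η)).card : ℝ) * h t := by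
      rw [Finset.sum_congr rfl fun α _ => Set.indicator_apply _ _ _, ← Finset.sum_filter,
        Finset.sum_const, nsmul_eq_mul]
    rw [hL]
    rcases (T.filter fun α => t ∈ Set.Ioc α (α + η)).eq_empty_or_nonempty with he | hne
    · rw [he]
      simp only [Finset.card_empty, Nat.cast_zero, zero_mul]
      exact mul_nonneg hS0 (Set.indicator_nonneg (fun a _ => h0 a) t)
    · obtain ⟨α₀, hα₀⟩ := hne
      rw [Finset.mem_filter] at hα₀
      obtain ⟨hα₀T, hα₀t⟩ := hα₀
      have h01 := hT α₀ hα₀T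
      have ht2 : t ∈ Set.Ioc (0:ℝ) 2 := by
        constructor
        · linarith [hα₀t.1, h01.1]
        · linarith [hα₀t.2, h01.2]
      rw [Set.indicator_of_mem ht2]
      exact mul_le_mul_of_nonneg_right (hcard t) (h0 t)
  have hmono : ∫ t, ∑ α ∈ T, (Set.Ioc α (α+η)).indicator h t ≤
      ∫ t, S * (Set.Ioc (0:ℝ) 2).indicator h t := by
    apply integral_mono (integrable_finset_sum T (fun α _ => hinteg α))
      (((hc.integrableOn_Ioc).integrable_indicator measurableSet_Ioc).const_mul S) hpt
  have hR : ∫ t, S * (Set.Ioc (0:ℝ) 2).indicator h t = S * ∫ t in (0:ℝ)..2, h t := by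
    rw [MeasureTheory.integral_const_mul, integral_indicator measurableSet_Ioc,
      ← intervalIntegral.integral_of_le (by norm_num : (0:ℝ) ≤ 2)]
  have hsplit : ∫ t in (0:ℝ)..2, h t = 2 * ∫ t in (0:ℝ)..1, h t := by
    have := intervalIntegral.integral_add_adjacent_intervals
      (hc.intervalIntegrable 0 1) (hc.intervalIntegrable 1 2) (μ := volume) (f := h)
    have hper : ∫ t in (1:ℝ)..2, h t = ∫ t in (0:ℝ)..1, h t := by
      have := hp.intervalIntegral_add_eq 1 0
      norm_num at this
      exact this
    linarith [hper ▸ this]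
  rw [hsum]
  calc (∫ t, ∑ α ∈ T, (Set.Ioc α (α+η)).indicator h t) ≤ S * ∫ t in (0:ℝ)..2, h t := by
        rw [← hR]; exact hmono
    _ = 2 * S * ∫ t in (0:ℝ)..1, h t := by rw [hsplit]; ring


lemma amgm (a b c d e : ℝ) (he : 0 < e) :
    |2 * (a * c + b * d)| ≤ e * (a^2 + b^2) + e⁻¹ * (c^2 + d^2) := by
  have h1 : 0 ≤ e⁻¹ * (e*a - c)^2 := mul_nonneg (by positivity) (sq_nonneg _)
  have h2 : 0 ≤ e⁻¹ * (e*b - d)^2 := mul_nonneg (by positivity) (sq_nonneg _)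
  have h3 : 0 ≤ e⁻¹ * (e*a + c)^2 := mul_nonneg (by positivity) (sq_nonneg _)
  have h4 : 0 ≤ e⁻¹ * (e*b + d)^2 := mul_nonneg (by positivity) (sq_nonneg _)
  have hee : e * e⁻¹ = 1 := mul_inv_cancel₀ he.ne'
  rw [abs_le]
  constructor <;> nlinarith [h1, h2, h3, h4, hee, sq_nonneg a, sq_nonneg b]



lemma hasDerivAt_creal {u : ℝ → ℂ} {u' : ℂ} {t : ℝ} (hu : HasDerivAt u u' t) :
    HasDerivAt (fun s => (u s).re) u'.re t := by
  have := (Complex.reCLM.hasFDerivAt.comp t hu.hasFDerivAt).hasDerivAt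
  simpa [Function.comp_def] using this

lemma hasDerivAt_cimag {u : ℝ → ℂ} {u' : ℂ} {t : ℝ} (hu : HasDerivAt u u' t) :
    HasDerivAt (fun s => (u s).im) u'.im t := by
  have := (Complex.imCLM.hasFDerivAt.comp t hu.hasFDerivAt).hasDerivAt
  simpa [Function.comp_def] using this

/-- The analytic large sieve core. -/
lemma core (N : ℕ) (hN : 0 < N) (c : ℕ → ℂ) (T : Finset ℝ)
    (hT : ∀ α ∈ T, 0 < α ∧ α ≤ 1) (S : ℝ) (hS0 : 0 ≤ S)
    (hS : ∀ α₀ ∈ T, ((T.filter fun α => ndist (α - α₀) < 1 / (2 * (N:ℝ))).card : ℝ) ≤ S) :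
    ∑ α ∈ T, Complex.normSq (tp c (Finset.Icc 1 N) α) ≤
      42 * N * S * ∑ m ∈ Finset.Icc 1 N, Complex.normSq (c m) := by
  set F := Finset.Icc 1 N with hF
  set g := tp c F with hg
  set c' : ℕ → ℂ := fun m => 2 * Real.pi * Complex.I * m * c m with hc'
  set g' := tp c' F with hg'
  set φ : ℝ → ℝ := fun t => Complex.normSq (g t) with hφ
  set φd : ℝ → ℝ := fun t => 2 * ((g t).re * (g' t).re + (g t).im * (g' t).im) with hφd
  set Z := ∑ m ∈ F, Complex.normSq (c m) with hZ
  have hZ0 : 0 ≤ Z := Finset.sum_nonneg fun m _ => Complex.normSq_nonneg _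
  set η : ℝ := 1 / (8 * N) with hη
  have hη0 : 0 < η := by positivity
  have hη8 : η ≤ 1/8 := by
    rw [hη]
    rw [div_le_div_iff₀ (by positivity) (by norm_num)]
    have : (1:ℝ) ≤ N := by exact_mod_cast hN
    nlinarith
  -- derivative facts
  have hgd : ∀ t, HasDerivAt g (g' t) t := fun t => tp_hasDerivAt c F t
  have hgc : Continuous g := tp_continuous c F
  have hg'c : Continuous g' := tp_continuous c' F
  have hφc : Continuous φ := Complex.continuous_normSq.comp hgc
  have hφdc : Continuous φd := by
    apply Continuous.mul continuous_const
    exact ((Complex.continuous_re.comp hgc).mul (Complex.continuous_re.comp hg'c)).add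
      ((Complex.continuous_im.comp hgc).mul (Complex.continuous_im.comp hg'c))
  have hd : ∀ t, HasDerivAt φ (φd t) t := by
    intro t
    have h1 := hasDerivAt_creal (hgd t)
    have h2 := hasDerivAt_cimag (hgd t)
    have h := (h1.mul h1).add (h2.mul h2)
    have heq : (((fun s => (g s).re) * fun s => (g s).re) + (fun s => (g s).im) * fun s => (g s).im) = φ := by
      funext s; simp only [Pi.add_apply, Pi.mul_apply, hφ, Complex.normSq_apply]
    rw [heq] at h
    refine h.congr_deriv ?_
    show _ = 2 * ((g t).re * (g' t).re + (g t).im * (g' t).im); ring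
  -- periodicity
  have hgp : Function.Periodic g 1 := tp_periodic c F
  have hg'p : Function.Periodic g' 1 := tp_periodic c' F
  have hφp : Function.Periodic φ 1 := fun t => by simp only [hφ, hgp t]
  have hφdp : Function.Periodic φd 1 := fun t => by simp only [hφd, hgp t, hg'p t]
  -- covering card bound
  have hcard : ∀ t : ℝ, ((T.filter fun α => t ∈ Set.Ioc α (α + η)).card : ℝ) ≤ S := by
    intro t
    rcases (T.filter fun α => t ∈ Set.Ioc α (α + η)).eq_empty_or_nonempty with he | hne
    · rw [he]; simpa using hS0
    · obtain ⟨α₀, hα₀⟩ := hne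
      rw [Finset.mem_filter] at hα₀
      have hsub : (T.filter fun α => t ∈ Set.Ioc α (α + η)) ⊆
          (T.filter fun α => ndist (α - α₀) < 1 / (2 * (N:ℝ))) := by
        intro α hα
        rw [Finset.mem_filter] at hα ⊢
        refine ⟨hα.1, ?_⟩
        have h1 : |α - α₀| < η := by
          have := hα.2; have := hα₀.2
          rw [Set.mem_Ioc] at *
          rw [abs_lt]; constructor <;> [skip; skip] <;> cases hα.2 <;> cases hα₀.2 <;> linarith [hα.2.1, hα.2.2, hα₀.2.1, hα₀.2.2]
        calc ndist (α - α₀) ≤ |α - α₀| := ndist_le_abs _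
          _ < η := h1
          _ < 1 / (2 * (N:ℝ)) := by
            rw [hη]
            rw [div_lt_div_iff₀ (by positivity) (by positivity)]
            have : (0:ℝ) < N := by exact_mod_cast hN
            nlinarith
      calc ((T.filter fun α => t ∈ Set.Ioc α (α + η)).card : ℝ)
          ≤ ((T.filter fun α => ndist (α - α₀) < 1 / (2 * (N:ℝ))).card : ℝ) := by
            exact_mod_cast Finset.card_le_card hsub
        _ ≤ S := hS α₀ hα₀.1
  -- Sobolev + covering
  have hstep : ∑ α ∈ T, φ α ≤
      η⁻¹ * (2 * S * ∫ t in (0:ℝ)..1, φ t) + 2 * S * ∫ t in (0:ℝ)..1, |φd t| := by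
    calc ∑ α ∈ T, φ α
        ≤ ∑ α ∈ T, (η⁻¹ * (∫ t in α..(α+η), φ t) + ∫ t in α..(α+η), |φd t|) :=
          Finset.sum_le_sum fun α _ => sobolev hd hφc hφdc hη0 α
      _ = η⁻¹ * (∑ α ∈ T, ∫ t in α..(α+η), φ t) + ∑ α ∈ T, ∫ t in α..(α+η), |φd t| := by
          rw [Finset.sum_add_distrib, Finset.mul_sum]
      _ ≤ η⁻¹ * (2 * S * ∫ t in (0:ℝ)..1, φ t) + 2 * S * ∫ t in (0:ℝ)..1, |φd t| := by
          apply add_le_add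
          · apply mul_le_mul_of_nonneg_left _ (by positivity)
            exact covering T hT hη0 hη8 S hS0 hcard φ hφc (fun t => Complex.normSq_nonneg _) hφp
          · exact covering T hT hη0 hη8 S hS0 hcard _ hφdc.abs (fun t => abs_nonneg _)
              (fun t => by rw [hφdp t])
  -- Parseval bounds
  have hP1 : ∫ t in (0:ℝ)..1, φ t = Z := tp_parseval c F
  have hP2 : ∫ t in (0:ℝ)..1, Complex.normSq (g' t) ≤ (2 * Real.pi * N)^2 * Z := by
    rw [tp_parseval c' F]
    rw [hZ, Finset.mul_sum]
    apply Finset.sum_le_sum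
    intro m hm
    have hmN : (m:ℝ) ≤ N := by
      rw [hF, Finset.mem_Icc] at hm; exact_mod_cast hm.2
    have hm0 : (0:ℝ) ≤ m := Nat.cast_nonneg m
    rw [hc']
    rw [Complex.normSq_mul]
    have : Complex.normSq (2 * Real.pi * Complex.I * m) = (2 * Real.pi * m)^2 := by
      simp [Complex.normSq_mul, Complex.normSq_apply]
      ring
    rw [this]
    apply mul_le_mul_of_nonneg_right _ (Complex.normSq_nonneg _)
    have hπ : (0:ℝ) < Real.pi := Real.pi_pos
    have hmm : (m:ℝ) * m ≤ (N:ℝ) * N := mul_le_mul hmN hmN hm0 (Nat.cast_nonneg N)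
    nlinarith [sq_nonneg Real.pi, mul_le_mul_of_nonneg_left hmm (by positivity : (0:ℝ) ≤ 4 * Real.pi^2)]
  have hAM : ∫ t in (0:ℝ)..1, |φd t| ≤ 4 * Real.pi * N * Z := by
    have hbd : ∀ t, |φd t| ≤ (2 * Real.pi * N) * φ t + (2 * Real.pi * N)⁻¹ * Complex.normSq (g' t) := by
      intro t
      have hπN : (0:ℝ) < 2 * Real.pi * N := by
        have := Real.pi_pos; positivity
      have := amgm (g t).re (g t).im (g' t).re (g' t).im (2 * Real.pi * N) hπN
      calc |φd t| = |2 * ((g t).re * (g' t).re + (g t).im * (g' t).im)| := rfl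
        _ ≤ (2 * Real.pi * N) * ((g t).re^2 + (g t).im^2) +
            (2 * Real.pi * N)⁻¹ * ((g' t).re^2 + (g' t).im^2) := this
        _ = (2 * Real.pi * N) * φ t + (2 * Real.pi * N)⁻¹ * Complex.normSq (g' t) := by
            simp only [hφ, Complex.normSq_apply]; ring
    have hπN : (0:ℝ) < 2 * Real.pi * N := by have := Real.pi_pos; positivity
    calc ∫ t in (0:ℝ)..1, |φd t|
        ≤ ∫ t in (0:ℝ)..1, ((2 * Real.pi * N) * φ t + (2 * Real.pi * N)⁻¹ * Complex.normSq (g' t)) := by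
          apply intervalIntegral.integral_mono_on (by norm_num) (hφdc.abs.intervalIntegrable _ _)
            (((continuous_const.mul hφc).add (continuous_const.mul (Complex.continuous_normSq.comp hg'c))).intervalIntegrable _ _)
            (fun t _ => hbd t)
      _ = (2 * Real.pi * N) * (∫ t in (0:ℝ)..1, φ t) +
          (2 * Real.pi * N)⁻¹ * ∫ t in (0:ℝ)..1, Complex.normSq (g' t) := by
          have hf : IntervalIntegrable (fun t => (2 * Real.pi * (N:ℝ)) * φ t) volume 0 1 :=
            (continuous_const.mul hφc).intervalIntegrable _ _
          have hg2 : IntervalIntegrable (fun t => (2 * Real.pi * (N:ℝ))⁻¹ * Complex.normSq (g' t)) volume 0 1 :=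
            (continuous_const.mul (Complex.continuous_normSq.comp hg'c)).intervalIntegrable _ _
          rw [intervalIntegral.integral_add hf hg2, intervalIntegral.integral_const_mul,
            intervalIntegral.integral_const_mul]
      _ ≤ (2 * Real.pi * N) * Z + (2 * Real.pi * N)⁻¹ * ((2 * Real.pi * N)^2 * Z) := by
          rw [hP1]
          apply add_le_add le_rfl
          exact mul_le_mul_of_nonneg_left hP2 (by positivity)
      _ = 4 * Real.pi * N * Z := by
          field_simp
          ring
  -- final
  have hfinal : ∑ α ∈ T, φ α ≤ (16 * N + 8 * Real.pi * N) * S * Z := by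
    calc ∑ α ∈ T, φ α ≤ η⁻¹ * (2 * S * ∫ t in (0:ℝ)..1, φ t) + 2 * S * ∫ t in (0:ℝ)..1, |φd t| := hstep
      _ ≤ η⁻¹ * (2 * S * Z) + 2 * S * (4 * Real.pi * N * Z) := by
          apply add_le_add
          · rw [hP1]
          · apply mul_le_mul_of_nonneg_left hAM (by positivity)
      _ = (16 * N + 8 * Real.pi * N) * S * Z := by
          rw [hη]
          have hN' : (0:ℝ) < N := by exact_mod_cast hN
          field_simp
          ring
  calc ∑ α ∈ T, Complex.normSq (tp c F α) = ∑ α ∈ T, φ α := rfl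
    _ ≤ (16 * N + 8 * Real.pi * N) * S * Z := hfinal
    _ ≤ 42 * N * S * Z := by
        apply mul_le_mul_of_nonneg_right _ hZ0
        apply mul_le_mul_of_nonneg_right _ hS0
        have hπ : Real.pi ≤ 3.15 := by linarith [Real.pi_lt_d2]
        have hN' : (0:ℝ) ≤ N := Nat.cast_nonneg N
        nlinarith


lemma abs_eC (x : ℝ) : ‖eC x‖ = 1 := by
  unfold eC
  rw [Complex.norm_exp]
  norm_num [Complex.mul_re, Complex.mul_im]

lemma eC_add (x y : ℝ) : eC (x + y) = eC x * eC y := by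
  unfold eC
  rw [← Complex.exp_add]
  congr 1
  push_cast
  ring

lemma eC_nat_mul (m : ℕ) (t : ℝ) :
    eC ((m:ℝ) * t) = Complex.exp (2 * Real.pi * Complex.I * m * t) := by
  unfold eC
  congr 1
  push_cast
  ring

lemma sum_shift {β : Type*} [AddCommMonoid β] (M : ℤ) (N : ℕ) (F : ℤ → β) :
    ∑ n ∈ Finset.Icc (M+1) (M+(N:ℤ)), F n = ∑ m ∈ Finset.Icc 1 N, F (M + m) := by
  apply Finset.sum_bij' (i := fun n _ => (n - M).toNat) (j := fun m _ => M + (m:ℤ))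
  · intro n hn
    rw [Finset.mem_Icc] at hn ⊢
    omega
  · intro m hm
    rw [Finset.mem_Icc] at hm ⊢
    omega
  · intro n hn
    rw [Finset.mem_Icc] at hn
    omega
  · intro m hm
    rw [Finset.mem_Icc] at hm
    omega
  · intro n hn
    rw [Finset.mem_Icc] at hn
    congr 1
    omega

lemma inner_sum_eq (M : ℤ) (N : ℕ) (z : ℤ → ℂ) (β : ℝ) :
    ∑ n ∈ Finset.Icc (M + 1) (M + (N:ℤ)), z n * eC ((n:ℝ) * β) =
      eC ((M:ℝ) * β) * tp (fun m => z (M + m)) (Finset.Icc 1 N) β := by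
  rw [sum_shift M N (fun n => z n * eC ((n:ℝ) * β))]
  unfold tp
  rw [Finset.mul_sum]
  apply Finset.sum_congr rfl
  intro m hm
  have h1 : ((M + (m:ℤ) : ℤ) : ℝ) * β = (M:ℝ) * β + (m:ℝ) * β := by push_cast; ring
  rw [h1, eC_add, eC_nat_mul]
  ring

lemma dyadic_mem {Q q j : ℕ} (hq : 0 < q) (hQq : q ≤ Q) :
    Nat.log 2 (Q / q) = j ↔ ((Q:ℝ) / 2^(j+1) < q ∧ (q:ℝ) ≤ (Q:ℝ) / 2^j) := by
  have hq0 : (0:ℝ) < q := by exact_mod_cast hq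
  have h2j : (0:ℝ) < 2^j := by positivity
  have h2j1 : (0:ℝ) < 2^(j+1) := by positivity
  have hnz : Q / q ≠ 0 := by
    have : 1 ≤ Q / q := (Nat.one_le_div_iff hq).mpr hQq
    omega
  rw [Nat.log_eq_iff (Or.inr ⟨one_lt_two, hnz⟩)]
  constructor
  · rintro ⟨h1, h2⟩
    have h1' : 2^j * q ≤ Q := (Nat.le_div_iff_mul_le hq).mp h1
    have h2' : Q < 2^(j+1) * q := by
      have := (Nat.div_lt_iff_lt_mul hq).mp h2
      omega
    constructor
    · rw [div_lt_iff₀ h2j1]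
      have : (Q:ℝ) < 2^(j+1) * q := by exact_mod_cast h2'
      linarith
    · rw [le_div_iff₀ h2j]
      have : (2:ℝ)^j * q ≤ Q := by exact_mod_cast h1'
      linarith
  · rintro ⟨h1, h2⟩
    constructor
    · apply (Nat.le_div_iff_mul_le hq).mpr
      have : (2:ℝ)^j * q ≤ Q := by
        rw [le_div_iff₀ h2j] at h2
        linarith
      exact_mod_cast this
    · apply (Nat.div_lt_iff_lt_mul hq).mpr
      have : (Q:ℝ) < 2^(j+1) * q := by
        rw [div_lt_iff₀ h2j1] at h1
        linarith
      exact_mod_cast this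

lemma frac_inj {k : ℕ} (hk : 0 < k) {q a q' a' : ℕ} (hq : 0 < q) (hq' : 0 < q')
    (hagcd : Nat.gcd a q = 1) (hagcd' : Nat.gcd a' q' = 1)
    (h : (a:ℝ) / (q:ℝ)^k = (a':ℝ) / (q':ℝ)^k) : q = q' ∧ a = a' := by
  have hqk : (0:ℝ) < (q:ℝ)^k := by positivity
  have hqk' : (0:ℝ) < (q':ℝ)^k := by positivity
  rw [div_eq_div_iff (by positivity) (by positivity)] at h
  have hnat : a * q'^k = a' * q^k := by exact_mod_cast h
  have hcop2 : Nat.Coprime (q'^k) a' := by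
    have h' : Nat.Coprime a' q' := hagcd'
    exact (h'.pow_right k).symm
  have hcop1 : Nat.Coprime (q^k) a := by
    have h' : Nat.Coprime a q := hagcd
    exact (h'.pow_right k).symm
  have hdvd : q^k ∣ q'^k := by
    apply Nat.Coprime.dvd_of_dvd_mul_left hcop1
    exact ⟨a', by rw [hnat, mul_comm]⟩
  have hdvd' : q'^k ∣ q^k := by
    apply Nat.Coprime.dvd_of_dvd_mul_left hcop2
    exact ⟨a, by rw [← hnat, mul_comm]⟩
  have hqq : q^k = q'^k := Nat.dvd_antisymm hdvd hdvd'
  have hqe : q = q' := Nat.pow_left_injective hk.ne' hqq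
  refine ⟨hqe, ?_⟩
  subst hqe
  exact Nat.eq_of_mul_eq_mul_right (Nat.pow_pos hq) hnat


end AuxLS

/-- Reduction of the large sieve to counting Farey fractions in short intervals:
`Δ_k(Q,N) ≪ Q^ε N S`, where (with `δ = 1/(2N)`)
`S = sup_{1 ≤ x ≤ Q} sup_{α₀ ∈ 𝒜_k(x)} |{α ∈ 𝒜_k(x) : ‖α − α₀‖ < δ}|`. -/
theorem statement17 (k : ℕ) (hk : 0 < k) (ε : ℝ) (hε : 0 < ε) :
    ∃ C : ℝ, 0 < C ∧
      ∀ Q N : ℕ, 0 < Q → 0 < N → Q ^ k ≤ N → N ≤ Q ^ (2 * k) →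
        ∀ (M : ℤ) (z : ℤ → ℂ),
          lsSum k Q N M z ≤
            C * (Q : ℝ) ^ ε * (N : ℝ) *
              sSup {r : ℝ | ∃ x : ℝ, 1 ≤ x ∧ x ≤ (Q : ℝ) ∧ ∃ α₀ ∈ Aset k x,
                r = (Set.ncard {α ∈ Aset k x | ndist (α - α₀) < 1 / (2 * (N : ℝ))} : ℝ)} *
              zSum N M z := by
  have hlog2 : (0:ℝ) < Real.log 2 := Real.log_pos (by norm_num)
  refine ⟨42 * (1 / (ε * Real.log 2) + 1), by positivity, ?_⟩
  intro Q N hQ hN hQN hNQ M z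
  set SSet : Set ℝ := {r : ℝ | ∃ x : ℝ, 1 ≤ x ∧ x ≤ (Q : ℝ) ∧ ∃ α₀ ∈ Aset k x,
      r = (Set.ncard {α ∈ Aset k x | ndist (α - α₀) < 1 / (2 * (N : ℝ))} : ℝ)} with hSSet
  set 𝒮 := sSup SSet with h𝒮
  set Z := zSum N M z with hZdef
  have hZ0 : 0 ≤ Z := Finset.sum_nonneg fun n _ => by positivity
  -- the big finset containing all relevant fractions
  set Big : Finset ℝ := ((Finset.Icc 1 Q) ×ˢ (Finset.Icc 1 (Q^k))).image
      (fun p : ℕ × ℕ => (p.2:ℝ) / (p.1:ℝ)^k) with hBigdef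
  have hBig : ∀ x : ℝ, x ≤ (Q:ℝ) → (Aset k x) ⊆ ↑Big := by
    intro x hx α hα
    obtain ⟨q, a, hq0, hq1, hq2, ha0, ha1, hcop, rfl⟩ := hα
    rw [hBigdef]
    simp only [Finset.coe_image, Set.mem_image, Finset.mem_coe, Finset.mem_product,
      Finset.mem_Icc]
    refine ⟨(q, a), ⟨⟨hq0, ?_⟩, ⟨ha0, ?_⟩⟩, rfl⟩
    · exact_mod_cast hq2.trans hx
    · have hqQ : q ≤ Q := by exact_mod_cast hq2.trans hx
      exact ha1.trans (Nat.pow_le_pow_left hqQ k)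
  have hbdd : BddAbove SSet := by
    refine ⟨(Big.card : ℝ), ?_⟩
    rintro r ⟨x, hx1, hx2, α₀, hα₀, rfl⟩
    have hsub : {α ∈ Aset k x | ndist (α - α₀) < 1 / (2 * (N : ℝ))} ⊆ ↑Big :=
      fun α hα => hBig x hx2 hα.1
    have := Set.ncard_le_ncard hsub Big.finite_toSet
    rw [Set.ncard_coe_finset] at this
    exact_mod_cast this
  have hub : ∀ x : ℝ, 1 ≤ x → x ≤ (Q:ℝ) → ∀ α₀ ∈ Aset k x,
      ((Set.ncard {α ∈ Aset k x | ndist (α - α₀) < 1 / (2 * (N : ℝ))}) : ℝ) ≤ 𝒮 :=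
    fun x h1 h2 α₀ hα₀ => le_csSup hbdd ⟨x, h1, h2, α₀, hα₀, rfl⟩
  have hone : (1:ℝ) ∈ Aset k 1 := by
    refine ⟨1, 1, one_pos, by norm_num, by norm_num, one_pos, by simp, Nat.coprime_one_left 1, by norm_num⟩
  have h𝒮0 : 0 ≤ 𝒮 := by
    have hmem : ((Set.ncard {α ∈ Aset k 1 | ndist (α - 1) < 1 / (2 * (N : ℝ))}) : ℝ) ∈ SSet := by
      refine ⟨1, le_refl 1, by exact_mod_cast hQ, 1, hone, rfl⟩
    exact (Nat.cast_nonneg _).trans (le_csSup hbdd hmem)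
  -- dyadic decomposition
  set J := Nat.log 2 Q with hJ
  set fj : ℕ → ℕ := fun q => Nat.log 2 (Q / q) with hfj
  have hmaps : ∀ q ∈ Finset.Icc 1 Q, fj q ∈ Finset.range (J+1) := by
    intro q hq
    rw [Finset.mem_range]
    have : fj q ≤ J := Nat.log_mono_right (Nat.div_le_self Q q)
    omega
  set c : ℕ → ℂ := fun m => z (M + m) with hc
  have hZc : Z = ∑ m ∈ Finset.Icc 1 N, Complex.normSq (c m) := by
    rw [hZdef]
    unfold zSum
    rw [sum_shift M N (fun n => ‖z n‖ ^ 2)]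
    exact Finset.sum_congr rfl fun m _ => Complex.sq_norm _
  -- per-dyadic-range bound
  have hper : ∀ j ∈ Finset.range (J+1),
      ∑ q ∈ (Finset.Icc 1 Q).filter (fun q => fj q = j),
        ∑ a ∈ (Finset.Icc 1 (q ^ k)).filter (fun a => Nat.gcd a q = 1),
          ‖∑ n ∈ Finset.Icc (M + 1) (M + (N : ℤ)),
            z n * eC ((n : ℝ) * (a : ℝ) / (q : ℝ) ^ k)‖ ^ 2 ≤ 42 * N * 𝒮 * Z := by
    intro j hj
    rw [Finset.mem_range] at hj
    set x : ℝ := (Q:ℝ) / 2^j with hx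
    have h2jQ : (2:ℝ)^j ≤ (Q:ℝ) := by
      have h1 : (2:ℕ)^j ≤ 2^J := Nat.pow_le_pow_right (by norm_num) (by omega)
      have h2 : (2:ℕ)^J ≤ Q := Nat.pow_log_le_self 2 hQ.ne'
      exact_mod_cast h1.trans h2
    have hx1 : 1 ≤ x := by
      rw [hx, le_div_iff₀ (by positivity)]
      linarith
    have hx2 : x ≤ (Q:ℝ) := by
      rw [hx, div_le_iff₀ (by positivity)]
      have h1 : (1:ℝ) ≤ 2^j := one_le_pow₀ (by norm_num : (1:ℝ) ≤ 2)
      have hQ0 : (0:ℝ) ≤ Q := Nat.cast_nonneg Q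
      nlinarith
    have hxhalf : x / 2 = (Q:ℝ) / 2^(j+1) := by
      rw [hx, div_div, pow_succ]
    -- the pair set and fraction set
    set P : Finset ((_ : ℕ) × ℕ) := ((Finset.Icc 1 Q).filter (fun q => fj q = j)).sigma
        (fun q => (Finset.Icc 1 (q^k)).filter (fun a => Nat.gcd a q = 1)) with hP
    set T : Finset ℝ := P.image (fun p => (p.2 : ℝ) / (p.1 : ℝ)^k) with hT
    have hmemP : ∀ p ∈ P, 1 ≤ p.1 ∧ p.1 ≤ Q ∧ fj p.1 = j ∧ 1 ≤ p.2 ∧ p.2 ≤ p.1^k ∧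
        Nat.gcd p.2 p.1 = 1 := by
      intro p hp
      rw [hP, Finset.mem_sigma, Finset.mem_filter, Finset.mem_filter, Finset.mem_Icc,
        Finset.mem_Icc] at hp
      tauto
    -- coe T = Aset k x
    have hTset : (↑T : Set ℝ) = Aset k x := by
      ext β
      constructor
      · intro hβ
        rw [hT] at hβ
        simp only [Finset.coe_image, Set.mem_image, Finset.mem_coe] at hβ
        obtain ⟨p, hp, rfl⟩ := hβ
        obtain ⟨h1, h2, h3, h4, h5, h6⟩ := hmemP p hp
        refine ⟨p.1, p.2, by omega, ?_, ?_, by omega, h5, h6, rfl⟩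
        · rw [hxhalf]
          exact ((dyadic_mem (by omega) h2).mp h3).1
        · exact ((dyadic_mem (by omega) h2).mp h3).2
      · intro hβ
        obtain ⟨q, a, hq0, hq1, hq2, ha0, ha1, hcop, rfl⟩ := hβ
        rw [hT]
        simp only [Finset.coe_image, Set.mem_image, Finset.mem_coe]
        have hqQ : q ≤ Q := by
          have : (q:ℝ) ≤ (Q:ℝ) := hq2.trans hx2
          exact_mod_cast this
        have hfjq : fj q = j := by
          rw [hfj]
          apply (dyadic_mem hq0 hqQ).mpr
          rw [hxhalf] at hq1
          exact ⟨hq1, hq2⟩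
        refine ⟨⟨q, a⟩, ?_, rfl⟩
        rw [hP, Finset.mem_sigma, Finset.mem_filter, Finset.mem_filter, Finset.mem_Icc,
          Finset.mem_Icc]
        exact ⟨⟨⟨hq0, hqQ⟩, hfjq⟩, ⟨ha0, ha1⟩, hcop⟩
    -- rewrite double sum as sum over T
    have hinj : Set.InjOn (fun p : (_ : ℕ) × ℕ => (p.2 : ℝ) / (p.1 : ℝ)^k) ↑P := by
      intro p hp p' hp' he
      obtain ⟨h1, h2, h3, h4, h5, h6⟩ := hmemP p (by exact_mod_cast hp)
      obtain ⟨h1', h2', h3', h4', h5', h6'⟩ := hmemP p' (by exact_mod_cast hp')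
      have := frac_inj hk (by omega : 0 < p.1) (by omega : 0 < p'.1) h6 h6' he
      exact Sigma.ext this.1 (heq_of_eq this.2)
    have hsum1 : ∑ q ∈ (Finset.Icc 1 Q).filter (fun q => fj q = j),
        ∑ a ∈ (Finset.Icc 1 (q ^ k)).filter (fun a => Nat.gcd a q = 1),
          ‖∑ n ∈ Finset.Icc (M + 1) (M + (N : ℤ)),
            z n * eC ((n : ℝ) * (a : ℝ) / (q : ℝ) ^ k)‖ ^ 2 =
        ∑ β ∈ T, Complex.normSq (tp c (Finset.Icc 1 N) β) := by
      rw [hT, Finset.sum_image hinj, hP, Finset.sum_sigma]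
      apply Finset.sum_congr rfl
      intro q hq
      apply Finset.sum_congr rfl
      intro a ha
      have hq0 : 0 < q := by
        rw [Finset.mem_filter, Finset.mem_Icc] at hq
        omega
      have harg : ∀ n : ℤ, (n : ℝ) * (a : ℝ) / (q : ℝ) ^ k = (n:ℝ) * ((a:ℝ) / (q:ℝ)^k) := by
        intro n
        ring
      rw [show (∑ n ∈ Finset.Icc (M + 1) (M + (N : ℤ)),
            z n * eC ((n : ℝ) * (a : ℝ) / (q : ℝ) ^ k)) =
          ∑ n ∈ Finset.Icc (M + 1) (M + (N : ℤ)),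
            z n * eC ((n : ℝ) * ((a : ℝ) / (q : ℝ)^k)) from
        Finset.sum_congr rfl fun n _ => by rw [harg n]]
      rw [inner_sum_eq M N z ((a:ℝ)/(q:ℝ)^k), norm_mul, abs_eC, one_mul, Complex.sq_norm]
    rw [hsum1]
    -- apply the core lemma
    apply le_trans (core N hN c T ?_ 𝒮 h𝒮0 ?_)
    · rw [hZc]
    · intro β hβ
      have hβ' : β ∈ Aset k x := by
        rw [← hTset]
        exact_mod_cast hβ
      obtain ⟨q, a, hq0, _, _, ha0, ha1, _, rfl⟩ := hβ'
      constructor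
      · positivity
      · rw [div_le_one (by positivity)]
        exact_mod_cast ha1
    · intro α₀ hα₀
      have hα₀' : α₀ ∈ Aset k x := by rw [← hTset]; exact_mod_cast hα₀
      have hcount : {α ∈ Aset k x | ndist (α - α₀) < 1 / (2 * (N : ℝ))} =
          ↑(T.filter fun α => ndist (α - α₀) < 1 / (2 * (N:ℝ))) := by
        ext β
        constructor
        · rintro ⟨h1, h2⟩
          simp only [Finset.coe_filter, Set.mem_setOf_eq]
          exact ⟨by rw [← Finset.mem_coe, hTset]; exact h1, h2⟩
        · intro h
          simp only [Finset.coe_filter, Set.mem_setOf_eq] at h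
          exact ⟨by rw [← hTset]; exact Finset.mem_coe.mpr h.1, h.2⟩
      have := hub x hx1 hx2 α₀ hα₀'
      rw [hcount, Set.ncard_coe_finset] at this
      exact this
  -- assemble
  have hdecomp : lsSum k Q N M z = ∑ j ∈ Finset.range (J+1),
      ∑ q ∈ (Finset.Icc 1 Q).filter (fun q => fj q = j),
        ∑ a ∈ (Finset.Icc 1 (q ^ k)).filter (fun a => Nat.gcd a q = 1),
          ‖∑ n ∈ Finset.Icc (M + 1) (M + (N : ℤ)),
            z n * eC ((n : ℝ) * (a : ℝ) / (q : ℝ) ^ k)‖ ^ 2 :=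
    (Finset.sum_fiberwise_of_maps_to hmaps _).symm
  have hJbound : ((J:ℝ) + 1) ≤ (1 / (ε * Real.log 2) + 1) * (Q:ℝ)^ε := by
    have hQ1 : (1:ℝ) ≤ (Q:ℝ) := by exact_mod_cast hQ
    have hQε1 : (1:ℝ) ≤ (Q:ℝ)^ε := by
      rw [show (1:ℝ) = (1:ℝ)^ε by rw [Real.one_rpow]]
      exact Real.rpow_le_rpow (by norm_num) hQ1 hε.le
    have h2J : (2:ℝ)^J ≤ (Q:ℝ) := by
      exact_mod_cast Nat.pow_log_le_self 2 hQ.ne'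
    have hJlog : (J:ℝ) * Real.log 2 ≤ Real.log Q := by
      calc (J:ℝ) * Real.log 2 = Real.log ((2:ℝ)^J) := by
            rw [Real.log_pow]
        _ ≤ Real.log Q := Real.log_le_log (by positivity) h2J
    have hlogQ : ε * Real.log Q ≤ (Q:ℝ)^ε := by
      have h1 : Real.log ((Q:ℝ)^ε) = ε * Real.log Q := Real.log_rpow (by linarith) ε
      have h2 : Real.log ((Q:ℝ)^ε) ≤ (Q:ℝ)^ε - 1 := Real.log_le_sub_one_of_pos (by positivity)
      linarith
    have hJQ : (J:ℝ) ≤ (Q:ℝ)^ε / (ε * Real.log 2) := by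
      rw [le_div_iff₀ (by positivity)]
      calc (J:ℝ) * (ε * Real.log 2) = ε * ((J:ℝ) * Real.log 2) := by ring
        _ ≤ ε * Real.log Q := by
            apply mul_le_mul_of_nonneg_left hJlog hε.le
        _ ≤ (Q:ℝ)^ε := hlogQ
    calc (J:ℝ) + 1 ≤ (Q:ℝ)^ε / (ε * Real.log 2) + (Q:ℝ)^ε := by linarith
      _ = (1 / (ε * Real.log 2) + 1) * (Q:ℝ)^ε := by ring
  calc lsSum k Q N M z = ∑ j ∈ Finset.range (J+1),
      ∑ q ∈ (Finset.Icc 1 Q).filter (fun q => fj q = j),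
        ∑ a ∈ (Finset.Icc 1 (q ^ k)).filter (fun a => Nat.gcd a q = 1),
          ‖∑ n ∈ Finset.Icc (M + 1) (M + (N : ℤ)),
            z n * eC ((n : ℝ) * (a : ℝ) / (q : ℝ) ^ k)‖ ^ 2 := hdecomp
    _ ≤ ∑ j ∈ Finset.range (J+1), (42 * N * 𝒮 * Z) := Finset.sum_le_sum hper
    _ = ((J:ℝ)+1) * (42 * N * 𝒮 * Z) := by
        rw [Finset.sum_const, Finset.card_range, nsmul_eq_mul]
        push_cast
        ring
    _ ≤ ((1 / (ε * Real.log 2) + 1) * (Q:ℝ)^ε) * (42 * N * 𝒮 * Z) := by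
        apply mul_le_mul_of_nonneg_right hJbound
        have hN0 : (0:ℝ) ≤ N := Nat.cast_nonneg N
        positivity
    _ = 42 * (1 / (ε * Real.log 2) + 1) * (Q:ℝ)^ε * N * 𝒮 * Z := by ring
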